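/- The set {l_I : I ⊆ {1,...,n-1}}, where l_I = l_{i_1} ∧ ... ∧ l_{i_k} for I = {i_1 < ... < i_k}, is a basis for the space of highest weight vectors (kernel of E) in Λ*W ≅ L(λ_1) ⊗ ... ⊗ L(λ_n); in particular this kernel has dimension 2^{n-1}. -/

import Mathlib

set_option synthInstance.maxHeartbeats 1000000
set_option maxHeartbeats 1000000

noncomputable section Aux

open ExteriorAlgebra

variable {K : Type*} [Field K] {M : Type*} [AddCommGroup M] [Module K M] {n : ℕ}

namespace Stmt6Aux

variable (u : Fin (n + 1) → M)

/-- product of ι's over a list of indices -/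
def Pl (L : List (Fin (n + 1))) : ExteriorAlgebra K M :=
  (L.map fun i => ι K (u i)).prod

@[simp] lemma Pl_nil : Pl (K := K) u [] = 1 := rfl

@[simp] lemma Pl_cons (a : Fin (n + 1)) (L : List (Fin (n + 1))) :
    Pl (K := K) u (a :: L) = ι K (u a) * Pl u L := by
  simp [Pl]

/-- product over a finset, in increasing order -/
def P (S : Finset (Fin (n + 1))) : ExteriorAlgebra K M := Pl u (S.sort (· ≤ ·))

lemma sort_erase (S : Finset (Fin (n + 1))) (a : Fin (n + 1)) :
    (S.sort (· ≤ ·)).erase a = (S.erase a).sort (· ≤ ·) := by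
  refine (fun hp h1 h2 => List.Perm.eq_of_pairwise' h1 h2 hp) ?_ ?_ (Finset.pairwise_sort _ _)
  · rw [← Multiset.coe_eq_coe, ← Multiset.coe_erase, Finset.sort_eq, Finset.sort_eq,
      Finset.erase_val]
  · exact (Finset.pairwise_sort _ _).sublist List.erase_sublist

lemma lemA (g : Module.Dual K M) (L : List (Fin (n + 1)))
    (h : ∀ a ∈ L, g (u a) = 0) :
    CliffordAlgebra.contractLeft (Q := (0 : QuadraticForm K M)) g (Pl u L) = 0 := by
  induction L with
  | nil => simpa using CliffordAlgebra.contractLeft_one (d := g)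
  | cons a L ih =>
    rw [Pl_cons, CliffordAlgebra.contractLeft_ι_mul, h a (by simp),
      ih fun b hb => h b (by simp [hb])]
    simp

lemma lemB (g : Module.Dual K M) (L : List (Fin (n + 1))) (hL : L.Nodup)
    (j : Fin (n + 1)) (hj : j ∈ L) (hg : ∀ a ∈ L, a ≠ j → g (u a) = 0) :
    ∃ ε : K, (ε = 1 ∨ ε = -1) ∧
      CliffordAlgebra.contractLeft (Q := (0 : QuadraticForm K M)) g (Pl u L)
        = (ε * g (u j)) • Pl u (L.erase j) := by
  induction L with
  | nil => simp at hj
  | cons a L ih =>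
    rcases List.mem_cons.mp hj with rfl | hjL
    · refine ⟨1, Or.inl rfl, ?_⟩
      rw [Pl_cons, CliffordAlgebra.contractLeft_ι_mul,
        lemA u g L (fun b hb => hg b (by simp [hb]) (by rintro rfl; exact (List.nodup_cons.mp hL).1 hb)),
        List.erase_cons_head]
      simp
    · have haj : a ≠ j := by rintro rfl; exact (List.nodup_cons.mp hL).1 hjL
      obtain ⟨ε, hε, hrec⟩ := ih (List.nodup_cons.mp hL).2 hjL
        (fun b hb hbj => hg b (by simp [hb]) hbj)
      refine ⟨-ε, by rcases hε with rfl | rfl <;> [right; left] <;> ring, ?_⟩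
      rw [Pl_cons, CliffordAlgebra.contractLeft_ι_mul, hg a (by simp) haj, hrec,
        List.erase_cons_tail (by simpa using haj), Pl_cons]
      rw [zero_smul, zero_sub, mul_smul_comm, ← neg_smul]
      ring_nf

variable (ub : Module.Basis (Fin (n + 1)) K M)

/-- iterated contraction by coordinate functionals along a list -/
def KL : List (Fin (n + 1)) → ExteriorAlgebra K M →ₗ[K] ExteriorAlgebra K M
  | [] => LinearMap.id
  | j :: L => (KL L) ∘ₗ CliffordAlgebra.contractLeft (Q := (0 : QuadraticForm K M)) (ub.coord j)

lemma coord_apply_self (i j : Fin (n + 1)) :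
    ub.coord j (ub i) = if i = j then 1 else 0 := by
  simp [Module.Basis.coord_apply, Module.Basis.repr_self, Finsupp.single_apply]

lemma lemAfin (j : Fin (n + 1)) (S : Finset (Fin (n + 1))) (hj : j ∉ S) :
    CliffordAlgebra.contractLeft (Q := (0 : QuadraticForm K M)) (ub.coord j) (P ub S) = 0 := by
  refine lemA ub _ _ fun a ha => ?_
  rw [coord_apply_self, if_neg]
  rintro rfl
  exact hj ((Finset.mem_sort _).mp ha)

lemma lemBfin (g : Module.Dual K M) (j : Fin (n + 1)) (S : Finset (Fin (n + 1))) (hj : j ∈ S)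
    (hg : ∀ a ∈ S, a ≠ j → g (u a) = 0) :
    ∃ ε : K, (ε = 1 ∨ ε = -1) ∧
      CliffordAlgebra.contractLeft (Q := (0 : QuadraticForm K M)) g (P u S)
        = (ε * g (u j)) • P u (S.erase j) := by
  obtain ⟨ε, hε, h⟩ := lemB u g (S.sort (· ≤ ·)) (Finset.sort_nodup _ _)
    j ((Finset.mem_sort _).mpr hj) (fun a ha => hg a ((Finset.mem_sort _).mp ha))
  exact ⟨ε, hε, by rwa [sort_erase] at h⟩

lemma K0 (L : List (Fin (n + 1))) (S : Finset (Fin (n + 1)))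
    (h : ∃ j ∈ L, j ∉ S) : KL ub L (P ub S) = 0 := by
  induction L generalizing S with
  | nil => simp at h
  | cons a L ih =>
    rw [KL, LinearMap.comp_apply]
    by_cases ha : a ∈ S
    · obtain ⟨j, hj, hjS⟩ := h
      rcases List.mem_cons.mp hj with rfl | hjL
      · exact absurd ha hjS
      · obtain ⟨ε, hε, hc⟩ := lemBfin ub (ub.coord a) a S ha
          (fun b hb hba => by rw [coord_apply_self, if_neg hba])
        rw [hc, map_smul, ih _ ⟨j, hjL, by simp [Finset.mem_erase]; tauto⟩, smul_zero]
    · rw [lemAfin ub a S ha, map_zero]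

lemma K1 (L : List (Fin (n + 1))) (S : Finset (Fin (n + 1))) (hL : L.Nodup)
    (hsub : ∀ j ∈ L, j ∈ S) :
    ∃ ε : K, IsUnit ε ∧ KL ub L (P ub S) = ε • P ub (S \ L.toFinset) := by
  induction L generalizing S with
  | nil => exact ⟨1, isUnit_one, by simp [KL]⟩
  | cons a L ih =>
    have haS : a ∈ S := hsub a (by simp)
    obtain ⟨ε₁, hε₁, hc⟩ := lemBfin ub (ub.coord a) a S haS
      (fun b hb hba => by rw [coord_apply_self, if_neg hba])
    obtain ⟨ε₂, hε₂, hrec⟩ := ih (S.erase a) (List.nodup_cons.mp hL).2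
      (fun j hj => Finset.mem_erase.mpr ⟨by rintro rfl; exact (List.nodup_cons.mp hL).1 hj,
        hsub j (by simp [hj])⟩)
    refine ⟨(ε₁ * 1) * ε₂, ?_, ?_⟩
    · refine IsUnit.mul ?_ hε₂
      rcases hε₁ with rfl | rfl <;> simp
    · rw [KL, LinearMap.comp_apply, hc, coord_apply_self, if_pos rfl, map_smul, hrec,
        smul_smul]
      congr 2
      ext x
      simp only [Finset.mem_sdiff, Finset.mem_erase, List.toFinset_cons, Finset.mem_insert]
      tauto

lemma piP_ne (S : Finset (Fin (n + 1))) (hS : S.Nonempty) :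
    (algebraMapInv : ExteriorAlgebra K M →ₐ[K] K) (P u S) = 0 := by
  obtain ⟨a, ha⟩ := hS
  have : a ∈ S.sort (· ≤ ·) := (Finset.mem_sort _).mpr ha
  obtain ⟨L1, L2, hL⟩ := List.append_of_mem this
  have hι : (algebraMapInv : ExteriorAlgebra K M →ₐ[K] K) (ι K (u a)) = 0 := by
    unfold ExteriorAlgebra.algebraMapInv
    rw [ExteriorAlgebra.lift_ι_apply]
    rfl
  rw [P, hL]
  unfold Pl
  rw [List.map_append, List.prod_append, List.map_cons, List.prod_cons, map_mul, map_mul, hι]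
  ring

@[simp] lemma P_empty : P (K := K) u ∅ = 1 := by simp [P, Pl]

lemma P_indep : LinearIndependent K (P (K := K) ub) := by
  rw [Fintype.linearIndependent_iff]
  intro g hsum T
  have happ := congrArg (fun x => (algebraMapInv : ExteriorAlgebra K M →ₐ[K] K)
    (KL ub (T.sort (· ≤ ·)) x)) hsum
  simp only [map_sum, map_smul, map_zero] at happ
  obtain ⟨εT, hεT, hT⟩ := K1 ub (T.sort (· ≤ ·)) T (Finset.sort_nodup _ _)
    (fun j hj => (Finset.mem_sort _).mp hj)
  rw [Finset.sum_eq_single T] at happ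
  · rw [hT, Finset.sort_toFinset, Finset.sdiff_self, P_empty, map_smul] at happ
    simp only [map_one, smul_eq_mul, mul_one] at happ
    exact (hεT.mul_left_eq_zero).mp happ
  · intro S _ hST
    by_cases hTS : ∀ j ∈ T, j ∈ S
    · obtain ⟨ε, hε, h⟩ := K1 ub (T.sort (· ≤ ·)) S (Finset.sort_nodup _ _)
        (fun j hj => hTS j ((Finset.mem_sort _).mp hj))
      have hne : (S \ T).Nonempty := by
        rw [Finset.sdiff_nonempty]
        intro hsub
        exact hST (Finset.Subset.antisymm hsub (fun j hj => hTS j hj))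
      rw [h, Finset.sort_toFinset, map_smul, piP_ne _ _ hne, smul_zero, smul_zero]
    · push_neg at hTS
      obtain ⟨j, hj, hjS⟩ := hTS
      rw [K0 ub _ S ⟨j, (Finset.mem_sort _).mpr hj, hjS⟩, map_zero, smul_zero]
  · intro h; exact absurd (Finset.mem_univ T) h

lemma mul_span_le {a : ExteriorAlgebra K M} {s : Set (ExteriorAlgebra K M)}
    {N' : Submodule K (ExteriorAlgebra K M)}
    (h : ∀ z ∈ s, a * z ∈ N') {x} (hx : x ∈ Submodule.span K s) : a * x ∈ N' := by
  have hle : Submodule.span K ((LinearMap.mulLeft K a) '' s) ≤ N' :=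
    Submodule.span_le.mpr (by rintro _ ⟨z, hz, rfl⟩; exact h z hz)
  have hm : (LinearMap.mulLeft K a) x ∈
      Submodule.map (LinearMap.mulLeft K a) (Submodule.span K s) :=
    Submodule.mem_map_of_mem hx
  rw [Submodule.map_span] at hm
  exact hle hm

lemma P_insert_min {a : Fin (n + 1)} {S : Finset (Fin (n + 1))} (h1 : ∀ b ∈ S, a < b) :
    P u (insert a S) = ι K (u a) * P u S := by
  have h2 : ∀ b ∈ S, (fun x1 x2 : Fin (n + 1) => x1 ≤ x2) a b := fun b hb => (h1 b hb).le
  have h3 : a ∉ S := fun ha => lt_irrefl a (h1 a ha)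
  rw [P, Finset.sort_insert _ h2 h3, Pl_cons]
  rfl

lemma P_singleton (j : Fin (n + 1)) : P (K := K) u {j} = ι K (u j) := by
  rw [P, Finset.sort_singleton]
  simp [Pl]

lemma mul_P_mem (S : Finset (Fin (n + 1))) : ∀ j, ι K (u j) * P u S ∈
    Submodule.span K (P u '' {T | T ⊆ insert j S}) := by
  induction S using Finset.strongInductionOn with
  | _ S ih =>
  intro j
  rcases S.eq_empty_or_nonempty with rfl | hS
  · rw [P_empty, mul_one, ← P_singleton u j]
    exact Submodule.subset_span ⟨{j}, by simp, rfl⟩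
  · set a := S.min' hS with ha
    have hmem : a ∈ S := S.min'_mem hS
    have hlt : ∀ b ∈ S.erase a, a < b := fun b hb =>
      lt_of_le_of_ne (S.min'_le b (Finset.mem_of_mem_erase hb))
        (Ne.symm (Finset.mem_erase.mp hb).1)
    have hSplit : P u S = ι K (u a) * P u (S.erase a) := by
      conv_lhs => rw [← Finset.insert_erase hmem]
      exact P_insert_min u hlt
    rcases lt_trichotomy j a with hj | rfl | hj
    · have hiS : ι K (u j) * P u S = P u (insert j S) :=
        (P_insert_min u (fun b hb => lt_of_lt_of_le hj (S.min'_le b hb))).symm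
      rw [hiS]
      exact Submodule.subset_span ⟨insert j S, by simp, rfl⟩
    · rw [hSplit, ← mul_assoc, ι_sq_zero, zero_mul]
      exact Submodule.zero_mem _
    · have hrec := ih (S.erase a) (Finset.erase_ssubset hmem) j
      have hxy : ι K (u j) * ι K (u a) = -(ι K (u a) * ι K (u j)) :=
        eq_neg_of_add_eq_zero_left (ExteriorAlgebra.ι_add_mul_swap (u j) (u a))
      have hanti : ι K (u j) * P u S = -(ι K (u a) * (ι K (u j) * P u (S.erase a))) := by
        rw [hSplit, ← mul_assoc, hxy, neg_mul, mul_assoc]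
      rw [hanti]
      refine Submodule.neg_mem _ ?_
      refine mul_span_le ?_ hrec
      rintro _ ⟨T, hT, rfl⟩
      have hTlt : ∀ b ∈ T, a < b := by
        intro b hb
        rcases Finset.mem_insert.mp (hT hb) with rfl | hb'
        · exact hj
        · exact hlt b hb'
      have haT : a ∉ T := fun h => lt_irrefl a (hTlt a h)
      rw [← P_insert_min u hTlt]
      refine Submodule.subset_span ⟨insert a T, ?_, rfl⟩
      intro x hx
      rcases Finset.mem_insert.mp hx with rfl | hx'
      · exact Finset.mem_insert_of_mem hmem
      · rcases Finset.mem_insert.mp (hT hx') with rfl | hx''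
        · exact Finset.mem_insert_self _ _
        · exact Finset.mem_insert_of_mem (Finset.mem_of_mem_erase hx'')

lemma span_P_top : Submodule.span K (Set.range (P (K := K) ub)) = ⊤ := by
  set N := Submodule.span K (Set.range (P (K := K) ub)) with hN
  have hmul_u : ∀ (j : Fin (n + 1)) (x : ExteriorAlgebra K M), x ∈ N →
      ι K (ub j) * x ∈ N := by
    intro j x hx
    refine mul_span_le ?_ hx
    rintro _ ⟨S, rfl⟩
    refine Submodule.span_le.mpr ?_ (mul_P_mem (⇑ub) S j)
    rintro _ ⟨T, _, rfl⟩
    exact Submodule.subset_span ⟨T, rfl⟩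
  have hmul : ∀ (v : M) (x : ExteriorAlgebra K M), x ∈ N → ι K v * x ∈ N := by
    intro v x hx
    have hv : (ι K v : ExteriorAlgebra K M) = ∑ j, (ub.repr v j) • ι K (ub j) := by
      conv_lhs => rw [← ub.sum_repr v]
      rw [map_sum]
      simp
    rw [hv, Finset.sum_mul]
    exact Submodule.sum_mem _ fun j _ => by
      rw [smul_mul_assoc]; exact N.smul_mem _ (hmul_u j x hx)
  have hone : (1 : ExteriorAlgebra K M) ∈ N := by
    rw [← P_empty (K := K) (u := ⇑ub)]
    exact Submodule.subset_span ⟨∅, rfl⟩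
  have key : ∀ x : ExteriorAlgebra K M, x ∈ N ∧ ∀ y ∈ N, x * y ∈ N := by
    intro x
    refine ExteriorAlgebra.induction ?_ ?_ ?_ ?_ x
    · intro r
      constructor
      · rw [Algebra.algebraMap_eq_smul_one]; exact N.smul_mem _ hone
      · intro y hy; rw [← Algebra.smul_def]; exact N.smul_mem _ hy
    · intro v
      exact ⟨by rw [← mul_one (ι K v)]; exact hmul v 1 hone, fun y hy => hmul v y hy⟩
    · intro a b ha hb
      exact ⟨ha.2 b hb.1, fun y hy => by rw [mul_assoc]; exact ha.2 _ (hb.2 y hy)⟩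
    · intro a b ha hb
      exact ⟨N.add_mem ha.1 hb.1, fun y hy => by rw [add_mul]; exact N.add_mem (ha.2 y hy) (hb.2 y hy)⟩
  exact Submodule.eq_top_iff'.mpr fun x => (key x).1

lemma exists_map_emb (T : Finset (Fin (n + 1))) (hT : (0 : Fin (n + 1)) ∉ T) :
    ∃ I : Finset (Fin n), I.map ⟨Fin.succ, Fin.succ_injective n⟩ = T := by
  refine ⟨Finset.univ.filter (fun i => i.succ ∈ T), ?_⟩
  ext x
  simp only [Finset.mem_map, Finset.mem_filter, Finset.mem_univ, true_and,
    Function.Embedding.coeFn_mk]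
  constructor
  · rintro ⟨i, hi, rfl⟩; exact hi
  · intro hx
    induction x using Fin.cases with
    | zero => exact absurd hx hT
    | succ i => exact ⟨i, hx, rfl⟩

theorem aux_main (φ : Module.Dual K M) (hφ0 : φ (ub 0) ≠ 0)
    (hφ : ∀ j : Fin (n + 1), j ≠ 0 → φ (ub j) = 0) :
    ∃ b : Module.Basis (Finset (Fin n)) K
      (LinearMap.ker (CliffordAlgebra.contractLeft (Q := (0 : QuadraticForm K M)) φ)),
      (∀ I, (b I : ExteriorAlgebra K M) =
        P (⇑ub) (I.map ⟨Fin.succ, Fin.succ_injective n⟩)) ∧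
      Module.finrank K (LinearMap.ker
        (CliffordAlgebra.contractLeft (Q := (0 : QuadraticForm K M)) φ)) = 2 ^ n := by
  set E := CliffordAlgebra.contractLeft (Q := (0 : QuadraticForm K M)) φ with hE
  set emb : Fin n ↪ Fin (n + 1) := ⟨Fin.succ, Fin.succ_injective n⟩ with hemb
  set v : Finset (Fin n) → ExteriorAlgebra K M := fun I => P (⇑ub) (I.map emb) with hv
  have h2 : LinearIndependent K ((P (K := K) (⇑ub)) ∘ (fun I : Finset (Fin n) => I.map emb)) :=
    (P_indep ub).comp (fun I : Finset (Fin n) => I.map emb) (Finset.map_injective emb)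
  have hv_indep : LinearIndependent K v := h2
  have hno0 : ∀ (I : Finset (Fin n)), (0 : Fin (n + 1)) ∉ I.map emb := by
    intro I h0
    obtain ⟨i, _, hi⟩ := Finset.mem_map.mp h0
    exact Fin.succ_ne_zero i hi
  have hEzero : ∀ (T : Finset (Fin (n + 1))), (0 : Fin (n + 1)) ∉ T → E (P (⇑ub) T) = 0 := by
    intro T hT
    refine lemA (⇑ub) φ _ fun a ha => ?_
    refine hφ a fun h => hT ?_
    rw [← h]; exact (Finset.mem_sort _).mp ha
  have himg : ∀ y : ExteriorAlgebra K M, E y ∈ Submodule.span K (Set.range v) := by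
    intro y
    have hy : y ∈ Submodule.span K (Set.range (P (K := K) ⇑ub)) := by
      rw [span_P_top]; trivial
    have : E y ∈ Submodule.map E (Submodule.span K (Set.range (P (K := K) ⇑ub))) :=
      Submodule.mem_map_of_mem hy
    rw [Submodule.map_span] at this
    refine Submodule.span_le.mpr ?_ this
    rintro _ ⟨_, ⟨S, rfl⟩, rfl⟩
    by_cases h0 : (0 : Fin (n + 1)) ∈ S
    · obtain ⟨ε, hε, hc⟩ := lemBfin (⇑ub) φ 0 S h0 (fun a _ h => hφ a h)
      obtain ⟨I, hI⟩ := exists_map_emb (S.erase 0) (fun h => (Finset.mem_erase.mp h).1 rfl)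
      rw [hc]
      refine Submodule.smul_mem _ _ (Submodule.subset_span ⟨I, ?_⟩)
      exact congrArg (P (⇑ub)) hI
    · rw [hEzero S h0]; exact Submodule.zero_mem _
  have hker : LinearMap.ker E = Submodule.span K (Set.range v) := by
    apply le_antisymm
    · intro x hx
      have hx0 : E x = 0 := hx
      have hkey : E (ι K (ub 0) * x) = φ (ub 0) • x := by
        rw [hE, CliffordAlgebra.contractLeft_ι_mul, ← hE, hx0, mul_zero, sub_zero]
      have : x = (φ (ub 0))⁻¹ • E (ι K (ub 0) * x) := by
        rw [hkey, smul_smul, inv_mul_cancel₀ hφ0, one_smul]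
      rw [this]
      exact Submodule.smul_mem _ _ (himg _)
    · refine Submodule.span_le.mpr ?_
      rintro _ ⟨I, rfl⟩
      exact LinearMap.mem_ker.mpr (hEzero _ (hno0 I))
  let b0 : Module.Basis (Finset (Fin n)) K (Submodule.span K (Set.range v)) := Module.Basis.span hv_indep
  let b := b0.map (LinearEquiv.ofEq _ _ hker.symm)
  refine ⟨b, fun I => ?_, ?_⟩
  · show ((LinearEquiv.ofEq _ _ hker.symm) (b0 I) : ExteriorAlgebra K M) = _
    rw [LinearEquiv.coe_ofEq_apply]
    exact congrArg Subtype.val (Module.Basis.span_apply hv_indep I)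
  · rw [Module.finrank_eq_card_basis b, Fintype.card_finset, Fintype.card_fin]

end Stmt6Aux

end Aux

noncomputable section

abbrev Rq : Type := RatFunc ℂ
abbrev qq : Rq := RatFunc.X

def wval (w : ℤ × ℤ) : ℤ := w.1 + w.2
def wpar (w : ℤ × ℤ) : ℤ := w.2

/-- In the exterior algebra model on `W ≅ L(λ₁) ⊗ ⋯ ⊗ L(λₙ)`
(`n = m + 1`, `dim W = n`), the wedges `l_I = l_{i₁} ∧ ⋯ ∧ l_{i_k}` over subsets
`I ⊆ {1, …, n-1}` form a basis of the space of highest weight vectors, i.e. of the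
kernel of `E = l_E ⌟`; in particular this kernel has dimension `2^{n-1}`. -/
theorem stmt6 {m : ℕ} (wt : Fin (m + 1) → ℤ × ℤ) :
    let M : Type := Fin (m + 1) → Rq
    let e : Fin (m + 1) → M := fun j => Pi.single j 1
    let psumLt : Fin (m + 1) → ℤ := fun j => ∑ i ∈ Finset.univ.filter (· < j), wpar (wt i)
    let vsumGt : Fin (m + 1) → ℤ := fun j => ∑ i ∈ Finset.univ.filter (j < ·), wval (wt i)
    let phiE : Module.Dual Rq M :=
      ∑ j, (((-1 : Rq) ^ psumLt j) * qq ^ (-(vsumGt j))) • LinearMap.proj j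
    let E : ExteriorAlgebra Rq M →ₗ[Rq] ExteriorAlgebra Rq M :=
      CliffordAlgebra.contractLeft (Q := (0 : QuadraticForm Rq M)) phiE
    let lvec : Fin m → M := fun i =>
      (-((-1 : Rq) ^ wpar (wt i.castSucc))) • e i.castSucc +
        (qq ^ (-(wval (wt i.succ)))) • e i.succ
    let lprod : Finset (Fin m) → ExteriorAlgebra Rq M := fun I =>
      ((I.sort (· ≤ ·)).map fun i => ExteriorAlgebra.ι Rq (lvec i)).prod
    (∃ b : Module.Basis (Finset (Fin m)) Rq (LinearMap.ker E),
        ∀ I, (b I : ExteriorAlgebra Rq M) = lprod I) ∧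
      Module.finrank Rq (LinearMap.ker E) = 2 ^ m := by
  intro M e psumLt vsumGt phiE E lvec lprod
  have hqne : (qq : Rq) ≠ 0 := RatFunc.X_ne_zero
  have hne1 : (-1 : Rq) ≠ 0 := by norm_num
  set c : Fin (m + 1) → Rq := fun j => ((-1 : Rq) ^ psumLt j) * qq ^ (-(vsumGt j)) with hc
  have hcne : ∀ j, c j ≠ 0 := fun j => mul_ne_zero (zpow_ne_zero _ hne1) (zpow_ne_zero _ hqne)
  -- `phiE` on standard basis vectors
  have hφe : ∀ k, phiE (e k) = c k := by
    intro k
    have hphiE : phiE = ∑ j, c j • LinearMap.proj j := rfl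
    have hek : ∀ j, e k j = if j = k then (1 : Rq) else 0 := by
      intro j
      have : e k = (Pi.single k (1 : Rq) : Fin (m + 1) → Rq) := rfl
      rw [this, Pi.single_apply]
    rw [hphiE, LinearMap.sum_apply]
    simp only [LinearMap.smul_apply, LinearMap.proj_apply, smul_eq_mul]
    calc (∑ j, c j * e k j) = ∑ j, (if j = k then c j else 0) := by
          refine Finset.sum_congr rfl fun j _ => ?_
          rw [hek j]
          split <;> simp
      _ = c k := by rw [Finset.sum_ite_eq' Finset.univ k c]; simp
  -- sum recurrences
  have hfiltLt : ∀ i : Fin m, Finset.univ.filter (· < i.succ)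
      = insert i.castSucc (Finset.univ.filter (· < i.castSucc)) := by
    intro i
    ext x
    simp only [Finset.mem_filter, Finset.mem_insert, Finset.mem_univ, true_and, Fin.lt_def,
      Fin.val_succ, Fin.coe_castSucc, Fin.ext_iff]
    omega
  have hfiltGt : ∀ i : Fin m, Finset.univ.filter (fun x => i.castSucc < x)
      = insert i.succ (Finset.univ.filter (fun x => i.succ < x)) := by
    intro i
    ext x
    simp only [Finset.mem_filter, Finset.mem_insert, Finset.mem_univ, true_and, Fin.lt_def,
      Fin.val_succ, Fin.coe_castSucc, Fin.ext_iff]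
    omega
  have hpsum_succ : ∀ i : Fin m, psumLt i.succ = wpar (wt i.castSucc) + psumLt i.castSucc := by
    intro i
    show ∑ k ∈ Finset.univ.filter (· < i.succ), wpar (wt k) = _
    rw [hfiltLt i, Finset.sum_insert (by simp [Fin.lt_def])]
  have hvsum_cast : ∀ i : Fin m, vsumGt i.castSucc = wval (wt i.succ) + vsumGt i.succ := by
    intro i
    show ∑ k ∈ Finset.univ.filter (fun x => i.castSucc < x), wval (wt k) = _
    rw [hfiltGt i, Finset.sum_insert (by simp [Fin.lt_def])]
  -- the triangular family
  set w : Fin (m + 1) → M := fun j => Fin.cases (e 0) lvec j with hwdef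
  have hw0 : w 0 = e 0 := by simp [hwdef]
  have hws : ∀ i : Fin m, w i.succ = lvec i := fun i => by simp [hwdef]
  have hφw0 : phiE (w 0) ≠ 0 := by rw [hw0, hφe]; exact hcne 0
  have hφws : ∀ i : Fin m, phiE (w i.succ) = 0 := by
    intro i
    rw [hws i]
    show phiE ((-((-1 : Rq) ^ wpar (wt i.castSucc))) • e i.castSucc
      + (qq ^ (-(wval (wt i.succ)))) • e i.succ) = 0
    rw [map_add, map_smul, map_smul, hφe, hφe, smul_eq_mul, smul_eq_mul, hc]
    simp only
    rw [hpsum_succ i, hvsum_cast i, neg_add, zpow_add₀ hne1, zpow_add₀ hqne]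
    ring
  -- `w` is a basis
  set A : Matrix (Fin (m + 1)) (Fin (m + 1)) Rq := Matrix.of fun k j => w j k with hA
  have hwcoordLt : ∀ (j k : Fin (m + 1)), j < k → w j k = 0 := by
    intro j k hjk
    induction j using Fin.cases with
    | zero =>
      rw [hw0]
      have he0 : e 0 = (Pi.single (0 : Fin (m + 1)) (1 : Rq) : Fin (m + 1) → Rq) := rfl
      rw [he0]
      exact Pi.single_eq_of_ne (by rintro rfl; exact lt_irrefl _ hjk) _
    | succ i =>
      rw [hws i]
      show (-((-1 : Rq) ^ wpar (wt i.castSucc))) • e i.castSucc k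
        + (qq ^ (-(wval (wt i.succ)))) • e i.succ k = 0
      have h1 : e i.castSucc k = 0 := Pi.single_eq_of_ne (by
        rintro rfl
        exact absurd hjk (by simp [Fin.lt_def])) _
      have h2 : e i.succ k = 0 := Pi.single_eq_of_ne (by
        rintro rfl; exact lt_irrefl _ hjk) _
      rw [h1, h2, smul_zero, smul_zero, add_zero]
  have htri : A.BlockTriangular id := by
    intro k j hjk
    exact hwcoordLt j k hjk
  have hdiag : ∀ j, A j j ≠ 0 := by
    intro j
    induction j using Fin.cases with
    | zero =>
      show w 0 0 ≠ 0
      rw [hw0]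
      have he0 : e 0 = (Pi.single (0 : Fin (m + 1)) (1 : Rq) : Fin (m + 1) → Rq) := rfl
      rw [he0]
      simp
    | succ i =>
      show w i.succ i.succ ≠ 0
      rw [hws i]
      show (-((-1 : Rq) ^ wpar (wt i.castSucc))) • e i.castSucc i.succ
        + (qq ^ (-(wval (wt i.succ)))) • e i.succ i.succ ≠ 0
      have h1 : e i.castSucc i.succ = 0 := Pi.single_eq_of_ne (by
        simp [Fin.ext_iff]) _
      have h2 : e i.succ i.succ = 1 := Pi.single_eq_same _ _
      rw [h1, h2, smul_zero, zero_add, smul_eq_mul, mul_one]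
      exact zpow_ne_zero _ hqne
  have hdet : IsUnit A.det := by
    rw [Matrix.det_of_upperTriangular htri]
    exact isUnit_iff_ne_zero.mpr (Finset.prod_ne_zero_iff.mpr fun j _ => hdiag j)
  set ub : Module.Basis (Fin (m + 1)) Rq M :=
    (Pi.basisFun Rq (Fin (m + 1))).map (Matrix.toLinearEquiv (Pi.basisFun Rq (Fin (m + 1))) A hdet)
    with hub_def
  have hub : ∀ j, ub j = w j := by
    intro j
    rw [hub_def, Module.Basis.map_apply, Matrix.toLinearEquiv_apply, Matrix.toLin_eq_toLin',
      Pi.basisFun_apply, Matrix.toLin'_apply, Matrix.mulVec_single]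
    funext k
    show A k j * 1 = w j k
    rw [mul_one]
    rfl
  -- apply the abstract result
  obtain ⟨b, hb, hrank⟩ := Stmt6Aux.aux_main ub phiE (by rw [hub]; exact hφw0)
    (fun j hj => by
      induction j using Fin.cases with
      | zero => exact absurd rfl hj
      | succ i => rw [hub]; exact hφws i)
  have hsortmap : ∀ I : Finset (Fin m),
      Finset.sort (I.map ⟨Fin.succ, Fin.succ_injective m⟩) (· ≤ ·)
        = (Finset.sort I (· ≤ ·)).map Fin.succ := by
    intro I
    refine (fun hp h1 h2 => List.Perm.eq_of_pairwise' h1 h2 hp) ?_ (Finset.pairwise_sort _ _) ?_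
    · rw [← Multiset.coe_eq_coe, ← Multiset.map_coe, Finset.sort_eq, Finset.sort_eq,
        Finset.map_val]
      rfl
    · exact List.Pairwise.map _ (fun a b h => Fin.succ_le_succ_iff.mpr h)
        (Finset.pairwise_sort _ _)
  have hPI : ∀ I : Finset (Fin m),
      Stmt6Aux.P (⇑ub) (I.map ⟨Fin.succ, Fin.succ_injective m⟩) = lprod I := by
    intro I
    rw [Stmt6Aux.P, hsortmap I, Stmt6Aux.Pl, List.map_map]
    show ((Finset.sort I (· ≤ ·)).map fun i => ExteriorAlgebra.ι Rq (ub i.succ)).prod = _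
    have : (fun i : Fin m => ExteriorAlgebra.ι Rq (ub i.succ))
        = fun i : Fin m => ExteriorAlgebra.ι Rq (lvec i) := by
      funext i
      rw [hub, hws]
    rw [this]
  exact ⟨⟨b, fun I => (hb I).trans (hPI I)⟩, hrank⟩

end
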